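/- Let X and Y be Banach spaces over 𝕂 (= ℝ or ℂ) and let T : X → Y be a bounded linear monomorphism (there is C > 0 with ‖Tx‖ ≥ C‖x‖ for all x). If T does not belong to the closure (in the operator norm of L(X,Y)) of the set NA(X,Y) of norm attaining operators, then T does not belong to the closure of the set QNA(X,Y) of quasi norm attaining operators. -/

import Mathlib

/-- If a bounded linear monomorphism `T` between Banach spaces does not belong to
the operator-norm closure of the set of norm attaining operators, then it does not belong to the
closure of the set of quasi norm attaining operators. -/
theorem monomorphism_not_in_closure_NA_implies_not_in_closure_QNA {𝕜 X Y : Type*} [RCLike 𝕜]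
    [NormedAddCommGroup X] [NormedSpace 𝕜 X] [CompleteSpace X] [Nontrivial X]
    [NormedAddCommGroup Y] [NormedSpace 𝕜 Y] [CompleteSpace Y]
    (T : X →L[𝕜] Y) (C : ℝ) (hC : 0 < C) (hmono : ∀ x : X, C * ‖x‖ ≤ ‖T x‖)
    (hNA : T ∉ closure {S : X →L[𝕜] Y | ∃ x₀ : X, ‖x₀‖ = 1 ∧ ‖S x₀‖ = ‖S‖}) :
    T ∉ closure {S : X →L[𝕜] Y | ∃ u ∈ closure (⇑S '' Metric.closedBall 0 1), ‖u‖ = ‖S‖} := by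
  intro hQNA
  -- From hNA, get a ball around T disjoint from NA
  rw [Metric.mem_closure_iff] at hNA hQNA
  push_neg at hNA
  obtain ⟨ε, hε, hball⟩ := hNA
  obtain ⟨S, hS, hdist⟩ := hQNA (min ε (C / 2)) (lt_min hε (by linarith))
  obtain ⟨u, hu, hunorm⟩ := hS
  have hTS : ‖T - S‖ < C / 2 := by
    have := (dist_eq_norm T S) ▸ hdist
    exact lt_of_lt_of_le this (min_le_right _ _)
  -- S is a monomorphism with constant C/2
  have hSmono : ∀ x : X, C / 2 * ‖x‖ ≤ ‖S x‖ := by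
    intro x
    have h1 : ‖T x - S x‖ ≤ C / 2 * ‖x‖ := by
      calc ‖T x - S x‖ = ‖(T - S) x‖ := by simp
        _ ≤ ‖T - S‖ * ‖x‖ := (T - S).le_opNorm x
        _ ≤ C / 2 * ‖x‖ := by
            apply mul_le_mul_of_nonneg_right hTS.le (norm_nonneg x)
    have h2 : C * ‖x‖ ≤ ‖T x‖ := hmono x
    have h3 : ‖T x‖ ≤ ‖T x - S x‖ + ‖S x‖ := by
      calc ‖T x‖ = ‖(T x - S x) + S x‖ := by rw [sub_add_cancel]
        _ ≤ ‖T x - S x‖ + ‖S x‖ := norm_add_le _ _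
    linarith
  have hC2 : (0:ℝ) < C / 2 := by linarith
  -- S is antilipschitz, hence closed embedding, so the image of the closed ball is closed
  have hanti : AntilipschitzWith (⟨C/2, hC2.le⟩ : NNReal)⁻¹ S := by
    apply S.antilipschitz_of_bound
    intro x
    change ‖x‖ ≤ (C/2)⁻¹ * ‖S x‖
    rw [le_inv_mul_iff₀ hC2]
    exact hSmono x
  have hclosed : IsClosed (⇑S '' Metric.closedBall 0 1) :=
    (hanti.isClosedEmbedding S.uniformContinuous).isClosedMap _
      Metric.isClosed_closedBall
  rw [hclosed.closure_eq] at hu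
  obtain ⟨x₀, hx₀, hSx₀⟩ := hu
  rw [Metric.mem_closedBall, dist_zero_right] at hx₀
  -- ‖S‖ > 0
  obtain ⟨z, hz⟩ := exists_ne (0 : X)
  have hznorm : 0 < ‖z‖ := norm_pos_iff.2 hz
  have hSpos : 0 < ‖S‖ := by
    have h1 := hSmono z
    have h2 := S.le_opNorm z
    have h3 : C / 2 * ‖z‖ ≤ ‖S‖ * ‖z‖ := le_trans h1 h2
    have := le_of_mul_le_mul_right h3 hznorm
    linarith
  -- ‖x₀‖ = 1
  have hx1 : ‖x₀‖ = 1 := by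
    have h1 : ‖S‖ ≤ ‖S‖ * ‖x₀‖ := by
      calc ‖S‖ = ‖S x₀‖ := by rw [hSx₀, hunorm]
        _ ≤ ‖S‖ * ‖x₀‖ := S.le_opNorm x₀
    have := (le_mul_iff_one_le_right hSpos).1 h1
    linarith
  -- So S ∈ NA, contradicting hball
  have hSNA : S ∈ {S : X →L[𝕜] Y | ∃ x₀ : X, ‖x₀‖ = 1 ∧ ‖S x₀‖ = ‖S‖} :=
    ⟨x₀, hx1, hSx₀ ▸ hunorm⟩
  have := hball S hSNA
  have := lt_of_lt_of_le hdist (min_le_left _ _)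
  linarith
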